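/- Let X be an infinite countable set, Γ_1, Γ_2 ≤ S(X) countable subgroups with a common finite subgroup Σ acting freely on X, and let Z and π_w be as defined. If both actions Γ_1 ↷ X and Γ_2 ↷ X have infinite orbits, then the set U = {w ∈ Z : π_w is transitive} is a dense G_δ subset of Z. -/

import Mathlib

theorem Equiv.Perm.inv_apply_self {α : Type*} (f : Equiv.Perm α) (x : α) : f⁻¹ (f x) = x :=
  f.symm_apply_apply x

theorem Equiv.Perm.apply_inv_self {α : Type*} (f : Equiv.Perm α) (x : α) : f (f⁻¹ x) = x :=
  f.apply_symm_apply x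

/-- `C` is a Følner sequence for the action of `G` on `X` given by `π`. -/
def IsFolnerSeq {G X : Type*} [Group G] (π : G →* Equiv.Perm X) (C : ℕ → Set X) : Prop :=
  (∀ n, (C n).Finite ∧ (C n).Nonempty) ∧
    ∀ g : G, Filter.Tendsto
      (fun n => ((symmDiff (C n) (π g '' C n)).ncard : ℝ) / (C n).ncard)
      Filter.atTop (nhds 0)

/-- The action of `G` on `X` given by `π` is amenable (admits a Følner sequence). -/
def IsAmenableAction {G X : Type*} [Group G] (π : G →* Equiv.Perm X) : Prop :=
  ∃ C : ℕ → Set X, IsFolnerSeq π C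

/-- The action given by `π` has infinite orbits. -/
def HasInfiniteOrbits {G X : Type*} [Group G] (π : G →* Equiv.Perm X) : Prop :=
  ∀ x : X, {y : X | ∃ g : G, π g x = y}.Infinite

/-- The action given by `π` is transitive. -/
def IsTransitiveAction {G X : Type*} [Group G] (π : G →* Equiv.Perm X) : Prop :=
  ∀ x y : X, ∃ g : G, π g x = y

/-- The action given by `π` is almost free: every non-trivial element has finitely many
fixed points. -/
def IsAlmostFreeAction {G X : Type*} [Group G] (π : G →* Equiv.Perm X) : Prop :=
  ∀ g : G, g ≠ 1 → {x : X | π g x = x}.Finite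

/-- The class 𝒜 of countable groups admitting a faithful, transitive and amenable action
on an infinite countable set. -/
def InClassA (G : Type*) [Group G] : Prop :=
  ∃ (X : Type) (_ : Countable X) (_ : Infinite X) (π : G →* Equiv.Perm X),
    Function.Injective π ∧ IsTransitiveAction π ∧ IsAmenableAction π

/-- The class 𝒜_ℱ of countable groups admitting an amenable, almost free action with
infinite orbits on a countable set. -/
def InClassAF (G : Type*) [Group G] : Prop :=
  ∃ (X : Type) (_ : Countable X) (π : G →* Equiv.Perm X),
    IsAmenableAction π ∧ IsAlmostFreeAction π ∧ HasInfiniteOrbits π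
section AmalgamSetup

universe u

variable (Γ₁ Γ₂ : Type u) [Group Γ₁] [Group Γ₂]

/-- The `Bool`-indexed family consisting of the two groups `Γ₁` and `Γ₂`. -/
def AmalgFam : Bool → Type u := fun b => cond b Γ₁ Γ₂

instance : ∀ b, Group (AmalgFam Γ₁ Γ₂ b)
  | true => ‹Group Γ₁›
  | false => ‹Group Γ₂›

variable {Γ₁ Γ₂} {S : Type u} [Group S]

/-- The two structure maps of the amalgam, as a `Bool`-indexed family of homomorphisms. -/
def amalgMaps (f₁ : S →* Γ₁) (f₂ : S →* Γ₂) : ∀ b : Bool, S →* AmalgFam Γ₁ Γ₂ b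
  | true => f₁
  | false => f₂

/-- The amalgamated free product `Γ₁ *_S Γ₂` along `f₁ : S →* Γ₁` and `f₂ : S →* Γ₂`,
realized as the pushout. -/
abbrev AmalgProd (f₁ : S →* Γ₁) (f₂ : S →* Γ₂) : Type _ :=
  Monoid.PushoutI (amalgMaps f₁ f₂)

/-- The canonical map `Γ₁ →* Γ₁ *_S Γ₂`. -/
abbrev amalgInl (f₁ : S →* Γ₁) (f₂ : S →* Γ₂) : Γ₁ →* AmalgProd f₁ f₂ :=
  Monoid.PushoutI.of (φ := amalgMaps f₁ f₂) true

/-- The canonical map `Γ₂ →* Γ₁ *_S Γ₂`. -/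
abbrev amalgInr (f₁ : S →* Γ₁) (f₂ : S →* Γ₂) : Γ₂ →* AmalgProd f₁ f₂ :=
  Monoid.PushoutI.of (φ := amalgMaps f₁ f₂) false

end AmalgamSetup

/-- The topology of pointwise convergence on the group `S(X)` of all bijections of a
(discrete, countable) set `X`:  `wₙ → w` iff for every finite `F ⊆ X` eventually
`wₙ|_F = w|_F`. -/
noncomputable instance permPointwiseTopology (X : Type*) :
    TopologicalSpace (Equiv.Perm X) :=
  TopologicalSpace.induced (fun w : Equiv.Perm X => (w : X → X))
    (@Pi.topologicalSpace X (fun _ => X) (fun _ => ⊥))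

section AmalgBaire

variable {X : Type*} (Γ₁ Γ₂ : Subgroup (Equiv.Perm X)) (Sig : Subgroup (Equiv.Perm X))
  (h1 : Sig ≤ Γ₁) (h2 : Sig ≤ Γ₂)

/-- The set `Z = {w ∈ S(X) : wσ = σw for all σ ∈ Σ}`. -/
def amalgZ : Set (Equiv.Perm X) :=
  {w | ∀ σ : Sig, w * (σ : Equiv.Perm X) = (σ : Equiv.Perm X) * w}

/-- The `Bool`-indexed family of homomorphisms `Γ₁ →* S(X)`, `Γ₂ →* S(X)` given by
`g ↦ g` on `Γ₁` and `h ↦ w⁻¹hw` on `Γ₂`. -/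
def amalgPiMaps (w : Equiv.Perm X) :
    ∀ b : Bool, AmalgFam ↥Γ₁ ↥Γ₂ b →* Equiv.Perm X
  | true => Γ₁.subtype
  | false => (MulAut.conj w⁻¹).toMonoidHom.comp Γ₂.subtype

/-- For `w ∈ Z`, the homomorphism `π_w : Γ₁ *_Σ Γ₂ →* S(X)` determined by `π_w(g) = g`
for `g ∈ Γ₁` and `π_w(h) = w⁻¹hw` for `h ∈ Γ₂`. -/
def amalgPi (w : amalgZ Sig) :
    AmalgProd (Subgroup.inclusion h1) (Subgroup.inclusion h2) →* Equiv.Perm X :=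
  Monoid.PushoutI.lift (amalgPiMaps Γ₁ Γ₂ w.1) Sig.subtype (by
    intro b
    cases b with
    | true => rfl
    | false =>
      ext σ x
      have hcomm : w.1⁻¹ * (σ : Equiv.Perm X) * (w.1⁻¹)⁻¹ = (σ : Equiv.Perm X) := by
        rw [inv_inv, mul_assoc, ← w.2 σ]; group
      show (w.1⁻¹ * (σ : Equiv.Perm X) * (w.1⁻¹)⁻¹) x = (σ : Equiv.Perm X) x
      rw [hcomm])

end AmalgBaire


section ATAux

open Topology

variable {X : Type*}

private lemma AT.isOpen_eval (x y : X) : IsOpen {w : Equiv.Perm X | w x = y} := by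
  letI : TopologicalSpace X := ⊥
  haveI : DiscreteTopology X := discreteTopology_bot X
  have hi : IsInducing (fun w : Equiv.Perm X => (w : X → X)) := ⟨rfl⟩
  exact hi.isOpen_iff.mpr ⟨(fun f : X → X => f x) ⁻¹' {y},
    (isOpen_discrete _).preimage (continuous_apply x), rfl⟩

private lemma AT.isClosed_comm (σ : Equiv.Perm X) :
    IsClosed {w : Equiv.Perm X | w * σ = σ * w} := by
  rw [← isOpen_compl_iff]
  have hset : {w : Equiv.Perm X | w * σ = σ * w}ᶜ =
      ⋃ x : X, ⋃ z : X, ⋃ u : X, ⋃ _ : u ≠ σ z,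
        ({w : Equiv.Perm X | w x = z} ∩ {w : Equiv.Perm X | w (σ x) = u}) := by
    ext w
    simp only [Set.mem_compl_iff, Set.mem_setOf_eq, Set.mem_iUnion, Set.mem_inter_iff]
    constructor
    · intro hw
      have hx : ∃ x, w (σ x) ≠ σ (w x) := by
        by_contra hno
        push_neg at hno
        exact hw (Equiv.ext fun z => by
          simpa [Equiv.Perm.mul_apply] using hno z)
      obtain ⟨x, hx⟩ := hx
      exact ⟨x, w x, w (σ x), fun hu => hx (by rw [hu]), rfl, rfl⟩
    · rintro ⟨x, z, u, hne, h1, h2⟩ hEq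
      apply hne
      have := Equiv.ext_iff.mp hEq (x)
      simp only [Equiv.Perm.mul_apply] at this
      rw [← h2, ← h1, this]
  rw [hset]
  exact isOpen_iUnion fun x => isOpen_iUnion fun z => isOpen_iUnion fun u =>
    isOpen_iUnion fun _ => (AT.isOpen_eval x z).inter (AT.isOpen_eval (σ x) u)

private lemma AT.polish [Countable X] : PolishSpace (Equiv.Perm X) := by
  letI : TopologicalSpace X := ⊥
  haveI : DiscreteTopology X := discreteTopology_bot X
  haveI : PolishSpace X := inferInstance
  set e : Equiv.Perm X → (X → X) × (X → X) := fun w => (⇑w, ⇑w⁻¹) with he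
  have hi : IsInducing (fun w : Equiv.Perm X => (w : X → X)) := ⟨rfl⟩
  have hconte : Continuous e := by
    apply Continuous.prodMk
    · exact hi.continuous
    · apply continuous_pi
      intro x
      rw [continuous_discrete_rng]
      intro y
      have hq : (fun w : Equiv.Perm X => (⇑w⁻¹ : X → X) x) ⁻¹' {y}
          = {w : Equiv.Perm X | w y = x} := by
        ext w
        simp only [Set.mem_preimage, Set.mem_singleton_iff, Set.mem_setOf_eq]
        constructor
        · intro hw; rw [← hw]; exact w.apply_inv_self x
        · intro hw; rw [← hw]; exact w.inv_apply_self y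
      rw [hq]
      exact AT.isOpen_eval y x
  have hind : IsInducing e := by
    refine ⟨le_antisymm (continuous_iff_le_induced.mp hconte) ?_⟩
    calc TopologicalSpace.induced e instTopologicalSpaceProd
        ≤ TopologicalSpace.induced e
            (TopologicalSpace.induced (Prod.fst : ((X → X) × (X → X)) → (X → X))
              Pi.topologicalSpace) := by
          exact induced_mono inf_le_left
      _ = TopologicalSpace.induced ((Prod.fst : ((X → X) × (X → X)) → (X → X)) ∘ e)
            Pi.topologicalSpace := induced_compose
      _ = permPointwiseTopology X := rfl
  have hinj : Function.Injective e := fun w w' h =>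
    Equiv.coe_fn_injective (congrArg Prod.fst h)
  have hc1 : ∀ x : X, Continuous (fun p : (X → X) × (X → X) => p.2 (p.1 x)) := by
    intro x
    rw [continuous_discrete_rng]
    intro u
    have hq : (fun p : (X → X) × (X → X) => p.2 (p.1 x)) ⁻¹' {u} =
        ⋃ z : X, ({p : (X → X) × (X → X) | p.1 x = z} ∩ {p | p.2 z = u}) := by
      ext p
      simp only [Set.mem_preimage, Set.mem_singleton_iff, Set.mem_iUnion,
        Set.mem_inter_iff, Set.mem_setOf_eq]
      constructor
      · intro hp; exact ⟨p.1 x, rfl, hp⟩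
      · rintro ⟨z, rfl, hz⟩; exact hz
    rw [hq]
    refine isOpen_iUnion fun z => IsOpen.inter ?_ ?_
    · have h1 : {p : (X → X) × (X → X) | p.1 x = z}
          = (fun p : (X → X) × (X → X) => p.1 x) ⁻¹' {z} := rfl
      rw [h1]
      exact (isOpen_discrete _).preimage ((continuous_apply x).comp continuous_fst)
    · have h2 : {p : (X → X) × (X → X) | p.2 z = u}
          = (fun p : (X → X) × (X → X) => p.2 z) ⁻¹' {u} := rfl
      rw [h2]
      exact (isOpen_discrete _).preimage ((continuous_apply z).comp continuous_snd)
  have hc2 : ∀ x : X, Continuous (fun p : (X → X) × (X → X) => p.1 (p.2 x)) := by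
    intro x
    rw [continuous_discrete_rng]
    intro u
    have hq : (fun p : (X → X) × (X → X) => p.1 (p.2 x)) ⁻¹' {u} =
        ⋃ z : X, ({p : (X → X) × (X → X) | p.2 x = z} ∩ {p | p.1 z = u}) := by
      ext p
      simp only [Set.mem_preimage, Set.mem_singleton_iff, Set.mem_iUnion,
        Set.mem_inter_iff, Set.mem_setOf_eq]
      constructor
      · intro hp; exact ⟨p.2 x, rfl, hp⟩
      · rintro ⟨z, rfl, hz⟩; exact hz
    rw [hq]
    refine isOpen_iUnion fun z => IsOpen.inter ?_ ?_
    · have h1 : {p : (X → X) × (X → X) | p.2 x = z}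
          = (fun p : (X → X) × (X → X) => p.2 x) ⁻¹' {z} := rfl
      rw [h1]
      exact (isOpen_discrete _).preimage ((continuous_apply x).comp continuous_snd)
    · have h2 : {p : (X → X) × (X → X) | p.1 z = u}
          = (fun p : (X → X) × (X → X) => p.1 z) ⁻¹' {u} := rfl
      rw [h2]
      exact (isOpen_discrete _).preimage ((continuous_apply z).comp continuous_fst)
  have hcr : IsClosed (Set.range e) := by
    have hrange : Set.range e = ⋂ x : X,
        ({p : (X → X) × (X → X) | p.2 (p.1 x) = x} ∩ {p | p.1 (p.2 x) = x}) := by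
      ext p
      simp only [Set.mem_range, Set.mem_iInter, Set.mem_inter_iff, Set.mem_setOf_eq]
      constructor
      · rintro ⟨w, rfl⟩ x
        exact ⟨Equiv.Perm.inv_apply_self w x, Equiv.Perm.apply_inv_self w x⟩
      · intro hp
        refine ⟨Equiv.mk p.1 p.2 (fun x => (hp x).1) (fun x => (hp x).2), rfl⟩
    rw [hrange]
    exact isClosed_iInter fun x =>
      (isClosed_eq (hc1 x) continuous_const).inter (isClosed_eq (hc2 x) continuous_const)
  have hce : Topology.IsClosedEmbedding e := ⟨⟨hind, hinj⟩, hcr⟩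
  exact hce.polishSpace

private lemma AT.baire [Countable X] (Sig : Subgroup (Equiv.Perm X)) :
    BaireSpace (amalgZ Sig) := by
  haveI : PolishSpace (Equiv.Perm X) := AT.polish
  have hcl : IsClosed (amalgZ Sig) := by
    have hz : amalgZ Sig = ⋂ σ : Sig, {w : Equiv.Perm X | w * ↑σ = ↑σ * w} := by
      ext w
      simp only [amalgZ, Set.mem_setOf_eq, Set.mem_iInter]
    rw [hz]
    exact isClosed_iInter fun σ => AT.isClosed_comm (σ : Equiv.Perm X)
  haveI : PolishSpace (amalgZ Sig) := hcl.polishSpace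
  letI := TopologicalSpace.upgradeIsCompletelyMetrizable (amalgZ Sig)
  exact inferInstance

private lemma AT.dense_char (Sig : Subgroup (Equiv.Perm X)) (S : Set (amalgZ Sig))
    (h : ∀ w : amalgZ Sig, ∀ F : Finset X, ∃ w' ∈ S,
      ∀ z ∈ F, (w'.1 : Equiv.Perm X) z = (w.1 : Equiv.Perm X) z) : Dense S := by
  letI : TopologicalSpace X := ⊥
  haveI : DiscreteTopology X := discreteTopology_bot X
  have hi1 : IsInducing (fun w : Equiv.Perm X => (w : X → X)) := ⟨rfl⟩
  have hi : IsInducing (fun w : amalgZ Sig => ((w.1 : Equiv.Perm X) : X → X)) :=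
    hi1.comp IsInducing.subtypeVal
  rw [hi.dense_iff]
  intro w
  rw [mem_closure_iff]
  intro o ho hwo
  rcases isOpen_pi_iff.mp ho _ hwo with ⟨I, u, hu, hsub⟩
  rcases h w I with ⟨w', hw'S, hw'⟩
  refine ⟨((w'.1 : Equiv.Perm X) : X → X), hsub ?_, Set.mem_image_of_mem _ hw'S⟩
  intro a ha
  rw [hw' a ha]
  exact (hu a ha).2

private lemma AT.exists_fresh (Sig : Subgroup (Equiv.Perm X)) [Finite Sig]
    (T : Set X) (hT : T.Infinite) (S : Finset X) :
    ∃ z ∈ T, ∀ σ : Sig, (σ : Equiv.Perm X) z ∉ S := by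
  classical
  have hbad : (⋃ σ : Sig, ((σ : Equiv.Perm X)) ⁻¹' (S : Set X)).Finite :=
    Set.finite_iUnion fun σ => S.finite_toSet.preimage (Equiv.injective _).injOn
  obtain ⟨z, hz⟩ := (hT.diff hbad).nonempty
  exact ⟨z, hz.1, fun σ hσ => hz.2 (Set.mem_iUnion.mpr ⟨σ, hσ⟩)⟩

private lemma AT.sigma_uniq (Sig : Subgroup (Equiv.Perm X))
    (hfree : ∀ σ : Sig, σ ≠ 1 → ∀ x : X, (σ : Equiv.Perm X) x ≠ x)
    (σ σ' : Sig) (z : X) (h : (σ : Equiv.Perm X) z = (σ' : Equiv.Perm X) z) : σ = σ' := by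
  by_contra hne
  have h1 : σ'⁻¹ * σ ≠ 1 := by
    intro hh
    exact hne ((inv_mul_eq_one.mp hh).symm)
  apply hfree (σ'⁻¹ * σ) h1 z
  show ((σ'⁻¹ * σ : Sig) : Equiv.Perm X) z = z
  rw [Subgroup.coe_mul]
  rw [Equiv.Perm.mul_apply, h]
  show ((σ'⁻¹ : Sig) : Equiv.Perm X) _ = z
  rw [Subgroup.coe_inv]
  exact Equiv.Perm.inv_apply_self _ _

open scoped Classical in
private noncomputable def AT.swapFun (Sig : Subgroup (Equiv.Perm X)) (b c : X) (z : X) : X :=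
  if h : ∃ σ : Sig, (σ : Equiv.Perm X) b = z then ((h.choose : Sig) : Equiv.Perm X) c
  else if h' : ∃ σ : Sig, (σ : Equiv.Perm X) c = z then ((h'.choose : Sig) : Equiv.Perm X) b
  else z

private lemma AT.exists_swap (Sig : Subgroup (Equiv.Perm X))
    (hfree : ∀ σ : Sig, σ ≠ 1 → ∀ x : X, (σ : Equiv.Perm X) x ≠ x) (b c : X)
    (hbc : ∀ σ : Sig, (σ : Equiv.Perm X) c ≠ b) :
    ∃ τ : Equiv.Perm X,
      (∀ σ : Sig, τ * (σ : Equiv.Perm X) = (σ : Equiv.Perm X) * τ) ∧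
      τ b = c ∧ τ c = b ∧
      (∀ z : X, (∀ σ : Sig, (σ : Equiv.Perm X) b ≠ z) →
        (∀ σ : Sig, (σ : Equiv.Perm X) c ≠ z) → τ z = z) := by
  classical
  have hbc' : ∀ σ σ' : Sig, (σ : Equiv.Perm X) b ≠ (σ' : Equiv.Perm X) c := by
    intro σ σ' hEq
    apply hbc (σ⁻¹ * σ')
    have h2 : ((σ⁻¹ : Sig) : Equiv.Perm X) ((σ : Equiv.Perm X) b)
        = ((σ⁻¹ : Sig) : Equiv.Perm X) ((σ' : Equiv.Perm X) c) := by rw [hEq]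
    rw [Subgroup.coe_inv, Equiv.Perm.inv_apply_self] at h2
    rw [Subgroup.coe_mul, Equiv.Perm.mul_apply, Subgroup.coe_inv]
    exact h2.symm
  have fb : ∀ σ : Sig, AT.swapFun Sig b c ((σ : Equiv.Perm X) b) = (σ : Equiv.Perm X) c := by
    intro σ
    have hex : ∃ σ' : Sig, (σ' : Equiv.Perm X) b = (σ : Equiv.Perm X) b := ⟨σ, rfl⟩
    have h1 : AT.swapFun Sig b c ((σ : Equiv.Perm X) b)
        = ((hex.choose : Sig) : Equiv.Perm X) c := by
      rw [AT.swapFun, dif_pos hex]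
    rw [h1, AT.sigma_uniq Sig hfree hex.choose σ b hex.choose_spec]
  have fc : ∀ σ : Sig, AT.swapFun Sig b c ((σ : Equiv.Perm X) c) = (σ : Equiv.Perm X) b := by
    intro σ
    have hnb : ¬∃ σ' : Sig, (σ' : Equiv.Perm X) b = (σ : Equiv.Perm X) c := by
      rintro ⟨σ', hσ'⟩
      exact hbc' σ' σ hσ'
    have hex : ∃ σ' : Sig, (σ' : Equiv.Perm X) c = (σ : Equiv.Perm X) c := ⟨σ, rfl⟩
    have h1 : AT.swapFun Sig b c ((σ : Equiv.Perm X) c)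
        = ((hex.choose : Sig) : Equiv.Perm X) b := by
      rw [AT.swapFun, dif_neg hnb, dif_pos hex]
    rw [h1, AT.sigma_uniq Sig hfree hex.choose σ c hex.choose_spec]
  have ffix : ∀ z : X, (∀ σ : Sig, (σ : Equiv.Perm X) b ≠ z) →
      (∀ σ : Sig, (σ : Equiv.Perm X) c ≠ z) → AT.swapFun Sig b c z = z := by
    intro z h1 h2
    have hn1 : ¬∃ σ : Sig, (σ : Equiv.Perm X) b = z := by rintro ⟨σ, hσ⟩; exact h1 σ hσ
    have hn2 : ¬∃ σ : Sig, (σ : Equiv.Perm X) c = z := by rintro ⟨σ, hσ⟩; exact h2 σ hσ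
    rw [AT.swapFun, dif_neg hn1, dif_neg hn2]
  have hinv : Function.Involutive (AT.swapFun Sig b c) := by
    intro z
    by_cases h : ∃ σ : Sig, (σ : Equiv.Perm X) b = z
    · obtain ⟨σ, rfl⟩ := h
      rw [fb σ, fc σ]
    · by_cases h' : ∃ σ : Sig, (σ : Equiv.Perm X) c = z
      · obtain ⟨σ, rfl⟩ := h'
        rw [fc σ, fb σ]
      · have h1 : ∀ σ : Sig, (σ : Equiv.Perm X) b ≠ z := fun σ hσ => h ⟨σ, hσ⟩
        have h2 : ∀ σ : Sig, (σ : Equiv.Perm X) c ≠ z := fun σ hσ => h' ⟨σ, hσ⟩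
        rw [ffix z h1 h2, ffix z h1 h2]
  refine ⟨hinv.toPerm _, ?_, ?_, ?_, ?_⟩
  · intro σ
    ext z
    simp only [Equiv.Perm.mul_apply, Function.Involutive.coe_toPerm]
    by_cases h : ∃ σ' : Sig, (σ' : Equiv.Perm X) b = z
    · obtain ⟨σ', rfl⟩ := h
      have e1 : (σ : Equiv.Perm X) ((σ' : Equiv.Perm X) b)
          = ((σ * σ' : Sig) : Equiv.Perm X) b := by
        rw [Subgroup.coe_mul, Equiv.Perm.mul_apply]
      rw [fb σ', e1, fb (σ * σ'), Subgroup.coe_mul, Equiv.Perm.mul_apply]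
    · by_cases h' : ∃ σ' : Sig, (σ' : Equiv.Perm X) c = z
      · obtain ⟨σ', rfl⟩ := h'
        have e1 : (σ : Equiv.Perm X) ((σ' : Equiv.Perm X) c)
            = ((σ * σ' : Sig) : Equiv.Perm X) c := by
          rw [Subgroup.coe_mul, Equiv.Perm.mul_apply]
        rw [fc σ', e1, fc (σ * σ'), Subgroup.coe_mul, Equiv.Perm.mul_apply]
      · have h1 : ∀ σ'' : Sig, (σ'' : Equiv.Perm X) b ≠ z := fun σ'' hσ'' => h ⟨σ'', hσ''⟩
        have h2 : ∀ σ'' : Sig, (σ'' : Equiv.Perm X) c ≠ z := fun σ'' hσ'' => h' ⟨σ'', hσ''⟩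
        have h1' : ∀ σ'' : Sig, (σ'' : Equiv.Perm X) b ≠ (σ : Equiv.Perm X) z := by
          intro σ'' hσ''
          apply h1 (σ⁻¹ * σ'')
          rw [Subgroup.coe_mul, Equiv.Perm.mul_apply, hσ'', Subgroup.coe_inv]
          exact Equiv.Perm.inv_apply_self _ _
        have h2' : ∀ σ'' : Sig, (σ'' : Equiv.Perm X) c ≠ (σ : Equiv.Perm X) z := by
          intro σ'' hσ''
          apply h2 (σ⁻¹ * σ'')
          rw [Subgroup.coe_mul, Equiv.Perm.mul_apply, hσ'', Subgroup.coe_inv]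
          exact Equiv.Perm.inv_apply_self _ _
        rw [ffix z h1 h2, ffix _ h1' h2']
  · have := fb 1
    simpa using this
  · have := fc 1
    simpa using this
  · intro z h1 h2
    exact ffix z h1 h2

section ATPi

variable (Γ₁ Γ₂ Sig : Subgroup (Equiv.Perm X)) (h1 : Sig ≤ Γ₁) (h2 : Sig ≤ Γ₂)

private lemma AT.amalgPi_of_true (w : amalgZ Sig) (g : Γ₁) :
    amalgPi Γ₁ Γ₂ Sig h1 h2 w
      (Monoid.PushoutI.of
        (φ := amalgMaps (Subgroup.inclusion h1) (Subgroup.inclusion h2)) true g)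
      = (g : Equiv.Perm X) := by
  unfold amalgPi
  erw [Monoid.PushoutI.lift_of]
  rfl

private lemma AT.amalgPi_of_false (w : amalgZ Sig) (g : Γ₂) :
    amalgPi Γ₁ Γ₂ Sig h1 h2 w
      (Monoid.PushoutI.of
        (φ := amalgMaps (Subgroup.inclusion h1) (Subgroup.inclusion h2)) false g)
      = (w.1)⁻¹ * (g : Equiv.Perm X) * w.1 := by
  unfold amalgPi
  erw [Monoid.PushoutI.lift_of]
  show (MulAut.conj (w.1)⁻¹) (g : Equiv.Perm X) = (w.1)⁻¹ * (g : Equiv.Perm X) * w.1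
  rw [MulAut.conj_apply, inv_inv]

private lemma AT.amalgPi_base (w : amalgZ Sig) (s : Sig) :
    amalgPi Γ₁ Γ₂ Sig h1 h2 w
      (Monoid.PushoutI.base
        (amalgMaps (Subgroup.inclusion h1) (Subgroup.inclusion h2)) s)
      = (s : Equiv.Perm X) := by
  unfold amalgPi
  rw [Monoid.PushoutI.lift_base]
  rfl

private lemma AT.isOpen_true (γ : Γ₁) (x y : X) :
    IsOpen {w : amalgZ Sig |
      amalgPi Γ₁ Γ₂ Sig h1 h2 w (Monoid.PushoutI.of
        (φ := amalgMaps (Subgroup.inclusion h1) (Subgroup.inclusion h2)) true γ) x = y} := by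
  have hset : {w : amalgZ Sig |
      amalgPi Γ₁ Γ₂ Sig h1 h2 w (Monoid.PushoutI.of
        (φ := amalgMaps (Subgroup.inclusion h1) (Subgroup.inclusion h2)) true γ) x = y}
      = {w : amalgZ Sig | (γ : Equiv.Perm X) x = y} := by
    ext w
    rw [Set.mem_setOf_eq, Set.mem_setOf_eq, AT.amalgPi_of_true]
  rw [hset]
  by_cases hc : (γ : Equiv.Perm X) x = y <;> simp [hc]

private lemma AT.isOpen_false (γ : Γ₂) (x y : X) :
    IsOpen {w : amalgZ Sig |
      amalgPi Γ₁ Γ₂ Sig h1 h2 w (Monoid.PushoutI.of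
        (φ := amalgMaps (Subgroup.inclusion h1) (Subgroup.inclusion h2)) false γ) x = y} := by
  have hset : {w : amalgZ Sig |
      amalgPi Γ₁ Γ₂ Sig h1 h2 w (Monoid.PushoutI.of
        (φ := amalgMaps (Subgroup.inclusion h1) (Subgroup.inclusion h2)) false γ) x = y}
      = ⋃ z : X, ({w : amalgZ Sig | (w.1 : Equiv.Perm X) x = z}
          ∩ {w : amalgZ Sig | (w.1 : Equiv.Perm X) y = (γ : Equiv.Perm X) z}) := by
    ext w
    rw [Set.mem_setOf_eq, AT.amalgPi_of_false]
    simp only [Set.mem_iUnion, Set.mem_inter_iff, Set.mem_setOf_eq,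
      Equiv.Perm.mul_apply]
    constructor
    · intro hw
      refine ⟨(w.1 : Equiv.Perm X) x, rfl, ?_⟩
      rw [← hw]
      exact Equiv.Perm.apply_inv_self _ _
    · rintro ⟨z, rfl, hz⟩
      rw [← hz]
      exact Equiv.Perm.inv_apply_self _ _
  rw [hset]
  exact isOpen_iUnion fun z =>
    ((AT.isOpen_eval x z).preimage continuous_subtype_val).inter
      ((AT.isOpen_eval y _).preimage continuous_subtype_val)

private lemma AT.isOpen_pi_apply
    (g : AmalgProd (Subgroup.inclusion h1) (Subgroup.inclusion h2)) :
    ∀ x y : X, IsOpen {w : amalgZ Sig | amalgPi Γ₁ Γ₂ Sig h1 h2 w g x = y} := by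
  induction g using Monoid.PushoutI.induction_on with
  | of i γ =>
    cases i with
    | true => exact AT.isOpen_true Γ₁ Γ₂ Sig h1 h2 γ
    | false => exact AT.isOpen_false Γ₁ Γ₂ Sig h1 h2 γ
  | base s =>
    intro x y
    have hset : {w : amalgZ Sig |
        amalgPi Γ₁ Γ₂ Sig h1 h2 w (Monoid.PushoutI.base
          (amalgMaps (Subgroup.inclusion h1) (Subgroup.inclusion h2)) s) x = y}
        = {w : amalgZ Sig | (s : Equiv.Perm X) x = y} := by
      ext w
      rw [Set.mem_setOf_eq, Set.mem_setOf_eq, AT.amalgPi_base]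
    rw [hset]
    by_cases hc : (s : Equiv.Perm X) x = y <;> simp [hc]
  | mul a b ha hb =>
    intro x y
    have hset : {w : amalgZ Sig | amalgPi Γ₁ Γ₂ Sig h1 h2 w (a * b) x = y}
        = ⋃ z : X, ({w : amalgZ Sig | amalgPi Γ₁ Γ₂ Sig h1 h2 w b x = z}
            ∩ {w : amalgZ Sig | amalgPi Γ₁ Γ₂ Sig h1 h2 w a z = y}) := by
      ext w
      simp only [Set.mem_setOf_eq, Set.mem_iUnion, Set.mem_inter_iff, map_mul,
        Equiv.Perm.mul_apply]
      constructor
      · intro hw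
        exact ⟨_, rfl, hw⟩
      · rintro ⟨z, rfl, hz⟩
        exact hz
    rw [hset]
    exact isOpen_iUnion fun z => (hb x z).inter (ha z y)

end ATPi

end ATAux

/-- **Lemma 4.1.**  Let `X` be an infinite countable set, `Γ₁, Γ₂ ≤ S(X)` countable
subgroups with a common finite subgroup `Σ` acting freely on `X`.  If both actions
`Γ₁ ↷ X` and `Γ₂ ↷ X` have infinite orbits, then `U = {w ∈ Z : π_w is transitive}` is
a dense `G_δ` subset of `Z`. -/
theorem amalg_transitive_dense_Gdelta
    {X : Type} [Countable X] [Infinite X]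
    (Γ₁ Γ₂ Sig : Subgroup (Equiv.Perm X)) [Countable Γ₁] [Countable Γ₂] [Finite Sig]
    (h1 : Sig ≤ Γ₁) (h2 : Sig ≤ Γ₂)
    (hfree : ∀ σ : Sig, σ ≠ 1 → ∀ x : X, (σ : Equiv.Perm X) x ≠ x)
    (hinf₁ : HasInfiniteOrbits Γ₁.subtype)
    (hinf₂ : HasInfiniteOrbits Γ₂.subtype) :
    Dense {w : amalgZ Sig | IsTransitiveAction (amalgPi Γ₁ Γ₂ Sig h1 h2 w)} ∧
    IsGδ {w : amalgZ Sig | IsTransitiveAction (amalgPi Γ₁ Γ₂ Sig h1 h2 w)} := by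
  classical
  have hVopen : ∀ x y : X, IsOpen (⋃ g : AmalgProd (Subgroup.inclusion h1)
      (Subgroup.inclusion h2), {w : amalgZ Sig | amalgPi Γ₁ Γ₂ Sig h1 h2 w g x = y}) :=
    fun x y => isOpen_iUnion fun g => AT.isOpen_pi_apply Γ₁ Γ₂ Sig h1 h2 g x y
  have hU : {w : amalgZ Sig | IsTransitiveAction (amalgPi Γ₁ Γ₂ Sig h1 h2 w)}
      = ⋂ p : X × X, ⋃ g : AmalgProd (Subgroup.inclusion h1) (Subgroup.inclusion h2),
        {w : amalgZ Sig | amalgPi Γ₁ Γ₂ Sig h1 h2 w g p.1 = p.2} := by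
    ext w
    simp only [Set.mem_setOf_eq, Set.mem_iInter, Set.mem_iUnion, Prod.forall]
    exact ⟨fun hw a b => hw a b, fun hw a b => hw a b⟩
  have hVdense : ∀ x y : X, Dense (⋃ g : AmalgProd (Subgroup.inclusion h1)
      (Subgroup.inclusion h2), {w : amalgZ Sig | amalgPi Γ₁ Γ₂ Sig h1 h2 w g x = y}) := by
    intro x y
    apply AT.dense_char
    intro w F
    obtain ⟨b, hbT, hb⟩ := AT.exists_fresh Sig _ (hinf₁ y) (F ∪ {x, y})
    obtain ⟨g₂, hg₂⟩ := hbT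
    rw [Subgroup.coe_subtype] at hg₂
    obtain ⟨c, hcT, hc⟩ := AT.exists_fresh Sig
      ((fun z => (w.1 : Equiv.Perm X)⁻¹ z) ''
        {z : X | ∃ g : Γ₂, (Γ₂.subtype g) ((w.1 : Equiv.Perm X) x) = z})
      ((Set.infinite_image_iff ((Equiv.injective _).injOn)).mpr
        (hinf₂ ((w.1 : Equiv.Perm X) x)))
      (insert b (F ∪ {x, y}))
    obtain ⟨d, ⟨h, hh⟩, hdc⟩ := hcT
    rw [Subgroup.coe_subtype] at hh
    have hbc : ∀ σ : Sig, (σ : Equiv.Perm X) c ≠ b := fun σ hσ =>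
      hc σ (by rw [hσ]; exact Finset.mem_insert_self _ _)
    obtain ⟨τ, hτcomm, hτb, hτc, hτfix⟩ := AT.exists_swap Sig hfree b c hbc
    have hmem : (w.1 * τ : Equiv.Perm X) ∈ amalgZ Sig := by
      intro σ
      rw [mul_assoc, hτcomm σ, ← mul_assoc, w.2 σ, mul_assoc]
    have hτx : τ x = x := by
      apply hτfix
      · intro σ hσ
        exact hb σ (by rw [hσ]; simp)
      · intro σ hσ
        exact hc σ (by rw [hσ]; simp)
    refine ⟨⟨w.1 * τ, hmem⟩, ?_, ?_⟩
    · apply Set.mem_iUnion.mpr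
      refine ⟨(Monoid.PushoutI.of
          (φ := amalgMaps (Subgroup.inclusion h1) (Subgroup.inclusion h2)) true g₂)⁻¹ *
        Monoid.PushoutI.of
          (φ := amalgMaps (Subgroup.inclusion h1) (Subgroup.inclusion h2)) false h, ?_⟩
      rw [Set.mem_setOf_eq, map_mul, map_inv, AT.amalgPi_of_true, AT.amalgPi_of_false]
      simp only [mul_inv_rev, inv_inv, Equiv.Perm.mul_apply]
      rw [hτx, hh]
      rw [show ((w.1 : Equiv.Perm X))⁻¹ d = c from hdc]
      have hτinv : τ⁻¹ c = b := by
        rw [← hτb]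
        exact Equiv.Perm.inv_apply_self _ _
      rw [hτinv, ← hg₂]
      exact Equiv.Perm.inv_apply_self _ _
    · intro z hz
      show (w.1 * τ : Equiv.Perm X) z = (w.1 : Equiv.Perm X) z
      have hfz1 : ∀ σ : Sig, (σ : Equiv.Perm X) b ≠ z := by
        intro σ hσ
        exact hb σ (by rw [hσ]; exact Finset.mem_union_left _ hz)
      have hfz2 : ∀ σ : Sig, (σ : Equiv.Perm X) c ≠ z := by
        intro σ hσ
        refine hc σ ?_
        rw [hσ]
        exact Finset.mem_insert_of_mem (Finset.mem_union_left _ hz)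
      rw [Equiv.Perm.mul_apply, hτfix z hfz1 hfz2]
  haveI : BaireSpace (amalgZ Sig) := AT.baire Sig
  constructor
  · rw [hU]
    exact dense_iInter_of_isOpen (fun p => hVopen p.1 p.2) (fun p => hVdense p.1 p.2)
  · rw [hU]
    exact IsGδ.iInter fun p => (hVopen p.1 p.2).isGδ
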